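/- Let q be a prime, let k and n be coprime positive integers with k < n, and suppose there exists a q-Steiner system S_q[2,k,n] on the F_q-vector space F_{q^n} that is invariant under the Singer subgroup, i.e., invariant under the maps x ↦ c·x for all nonzero c ∈ F_{q^n}. Then there exists a ((q^n − 1)/(q − 1), (q^k − 1)/(q − 1), 1) difference family over the cyclic group Z_{(q^n−1)/(q−1)}. -/

import Mathlib

open Finset Polynomial


lemma aux_dvd_sub_one {q k n d : ℕ} (hq : 2 ≤ q) (hco : Nat.Coprime k n)
    (h1 : d ∣ q ^ k - 1) (h2 : d ∣ q ^ n - 1) : d ∣ q - 1 := by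
  have hq1 : 1 ≤ q := by omega
  have key : ∀ m : ℕ, d ∣ q ^ m - 1 → (q : ZMod d) ^ m = 1 := by
    intro m hm
    have h1m : 1 ≤ q ^ m := Nat.one_le_pow _ _ (by omega)
    have hz : ((q ^ m - 1 : ℕ) : ZMod d) = 0 :=
      (ZMod.natCast_eq_zero_iff _ _).2 hm
    have h2 : ((q ^ m : ℕ) : ZMod d) = 1 := by
      conv_lhs => rw [← Nat.sub_add_cancel h1m]
      push_cast
      push_cast at hz
      rw [hz, zero_add]
    exact_mod_cast h2
  have hd1 : orderOf (q : ZMod d) ∣ Nat.gcd k n :=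
    Nat.dvd_gcd (orderOf_dvd_of_pow_eq_one (key k h1))
      (orderOf_dvd_of_pow_eq_one (key n h2))
  rw [hco] at hd1
  have h1' : (q : ZMod d) = 1 := orderOf_eq_one_iff.mp (Nat.eq_one_of_dvd_one hd1)
  have h2' : ((q : ℕ) : ZMod d) = ((1 : ℕ) : ZMod d) := by exact_mod_cast h1'
  exact (Nat.modEq_iff_dvd' hq1).1 ((ZMod.natCast_eq_natCast_iff _ _ _).1 h2').symm

lemma aux_mem_prime_field {q : ℕ} [Fact (Nat.Prime q)] {F : Type*} [Field F] [Fintype F]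
    [Algebra (ZMod q) F] (u : F) (hu : u ^ q = u) :
    ∃ c : ZMod q, algebraMap (ZMod q) F c = u := by
  classical
  have hq1 : 1 < q := (Fact.out : Nat.Prime q).one_lt
  set P : F[X] := X ^ q - X with hP
  have hPne : P ≠ 0 := FiniteField.X_pow_card_sub_X_ne_zero F hq1
  set A : Finset F := univ.filter (fun z : F => z ^ q = z) with hA
  set Im : Finset F := univ.image (algebraMap (ZMod q) F) with hIm
  have hsub : Im ⊆ A := by
    intro z hz
    rw [hIm, mem_image] at hz
    obtain ⟨c, -, rfl⟩ := hz
    simp only [hA, mem_filter, mem_univ, true_and]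
    rw [← map_pow, ZMod.pow_card]
  have hcardIm : Im.card = q := by
    rw [hIm, Finset.card_image_of_injective _ (algebraMap (ZMod q) F).injective,
      card_univ, ZMod.card]
  have hAsub : A ⊆ P.roots.toFinset := by
    intro z hz
    rw [hA, mem_filter] at hz
    rw [Multiset.mem_toFinset, mem_roots hPne]
    simp [hP, sub_eq_zero, hz.2]
  have hcardA : A.card ≤ q := by
    calc A.card ≤ P.roots.toFinset.card := Finset.card_le_card hAsub
      _ ≤ Multiset.card P.roots := Multiset.toFinset_card_le _
      _ ≤ P.natDegree := Polynomial.card_roots' P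
      _ = q := FiniteField.X_pow_card_sub_X_natDegree_eq F hq1
  have hAI : A = Im := (Finset.eq_of_subset_of_card_le hsub (le_trans hcardA (le_of_eq hcardIm.symm))).symm
  have hu' : u ∈ A := by simp [hA, hu]
  rw [hAI, hIm, mem_image] at hu'
  obtain ⟨c, -, hc⟩ := hu'
  exact ⟨c, hc⟩

set_option maxHeartbeats 2000000

/-- Let `q` be a prime and `k`, `n` coprime with `0 < k < n`. If there exists a
q-Steiner system `S_q[2, k, n]` on the `ZMod q`-vector space `GaloisField q n`
invariant under the Singer subgroup (the maps `x ↦ c * x` for nonzero `c`), then there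
exists a `((q^n - 1)/(q - 1), (q^k - 1)/(q - 1), 1)` difference family over
`ZMod ((q^n - 1)/(q - 1))`. -/
theorem difference_family_of_singer_invariant_steiner_general (q k n : ℕ)
    [Fact (Nat.Prime q)] (hk : 0 < k) (hkn : k < n) (hco : Nat.Coprime k n)
    (S : Set (Submodule (ZMod q) (GaloisField q n)))
    (hdim : ∀ W ∈ S, Module.finrank (ZMod q) W = k)
    (hcov : ∀ T : Submodule (ZMod q) (GaloisField q n), Module.finrank (ZMod q) T = 2 →
      ∃! W, W ∈ S ∧ T ≤ W)
    (hinv : ∀ c : GaloisField q n, c ≠ 0 → ∀ W ∈ S,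
      Submodule.map (LinearMap.mulLeft (ZMod q) c) W ∈ S) :
    ∃ (s : ℕ) (B : Fin s → Finset (ZMod ((q ^ n - 1) / (q - 1)))),
      (∀ i, (B i).card = (q ^ k - 1) / (q - 1)) ∧
      (∀ d : ZMod ((q ^ n - 1) / (q - 1)), d ≠ 0 →
        (∑ i, ((B i ×ˢ B i).filter fun p => p.1 ≠ p.2 ∧ p.1 - p.2 = d).card) = 1) := by
  classical
  set F := GaloisField q n with hF
  have hq2 : 2 ≤ q := (Fact.out : Nat.Prime q).two_le
  haveI : Fintype F := Fintype.ofFinite F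
  have hcardF : Fintype.card F = q ^ n := by
    rw [Fintype.card_eq_nat_card]; exact GaloisField.card q n (by omega)
  have hcardU : Fintype.card Fˣ = q ^ n - 1 := by
    rw [Fintype.card_units, hcardF]
  set N := q ^ n - 1 with hN
  set v := N / (q - 1) with hv
  have hqn2 : 2 ≤ q ^ n := le_trans hq2 (Nat.le_self_pow (by omega) q)
  have hN0 : 0 < N := by omega
  have hdvd : (q - 1) ∣ N := by simpa using Nat.sub_dvd_pow_sub_pow q 1 n
  have hNv : v * (q - 1) = N := Nat.div_mul_cancel hdvd
  have hv0 : 0 < v := Nat.div_pos (Nat.le_of_dvd hN0 hdvd) (by omega)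
  haveI : NeZero v := ⟨hv0.ne'⟩
  obtain ⟨g, hg⟩ := IsCyclic.exists_generator (α := Fˣ)
  have hord : orderOf g = N := by
    rw [orderOf_eq_card_of_forall_mem_zpowers hg, Nat.card_eq_fintype_card]; exact hcardU
  have hexp : ∀ x : Fˣ, ∃ i : ℕ, g ^ i = x := by
    intro x
    have hfo : IsOfFinOrder g := isOfFinOrder_of_finite g
    have := (hfo.mem_powers_iff_mem_zpowers).2 (hg x)
    obtain ⟨i, hi⟩ := this
    exact ⟨i, hi⟩
  choose ind hind using hexp
  set ψ : Fˣ → ZMod v := fun x => ((ind x : ℕ) : ZMod v) with hψ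
  -- L1
  have L1 : ∀ i : ℕ, ψ (g ^ i) = (i : ZMod v) := by
    intro i
    have h : g ^ ind (g ^ i) = g ^ i := hind _
    have hmod : ind (g ^ i) ≡ i [MOD N] := by
      rw [← hord]; exact (pow_eq_pow_iff_modEq).1 h
    have : ind (g ^ i) ≡ i [MOD v] := hmod.of_dvd (Dvd.intro (q-1) (by omega))
    exact (ZMod.natCast_eq_natCast_iff _ _ _).2 this
  -- L2
  have Lhom : ∀ x y : Fˣ, ψ (x * y) = ψ x + ψ y := by
    intro x y
    have : x * y = g ^ (ind x + ind y) := by rw [pow_add, hind, hind]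
    rw [this, L1]; push_cast; rfl
  have Lone : ψ 1 = 0 := by
    have : (1 : Fˣ) = g ^ 0 := by rw [pow_zero]
    rw [this, L1]; exact Nat.cast_zero
  have Linv : ∀ x : Fˣ, ψ x⁻¹ = -ψ x := by
    intro x
    have := Lhom x x⁻¹
    rw [mul_inv_cancel, Lone] at this
    linear_combination -this
  -- L3
  have L3 : ∀ x : Fˣ, ψ x = 0 ↔ x ^ (q - 1) = 1 := by
    intro x
    constructor
    · intro h
      have hdv : v ∣ ind x := (ZMod.natCast_eq_zero_iff _ _).1 h
      obtain ⟨m, hm⟩ := hdv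
      rw [← hind x, ← pow_mul]
      have : ind x * (q - 1) = N * m := by rw [hm, ← hNv]; ring
      rw [this, pow_mul, ← hord, pow_orderOf_eq_one, one_pow]
    · intro h
      have : g ^ (ind x * (q - 1)) = 1 := by rw [pow_mul, hind]; exact h
      have hdvd2 : N ∣ ind x * (q - 1) := by rw [← hord]; exact orderOf_dvd_of_pow_eq_one this
      have : v ∣ ind x := by
        rw [← hNv] at hdvd2
        exact (Nat.mul_dvd_mul_iff_right (show 0 < q - 1 by omega)).1 hdvd2
      exact (ZMod.natCast_eq_zero_iff _ _).2 this
  -- scalar lemmas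
  have hq1 : 1 ≤ q := by omega
  have Lsc : ∀ x : Fˣ, x ^ (q - 1) = 1 ↔
      ∃ c : ZMod q, algebraMap (ZMod q) F c = (x : F) := by
    intro x
    constructor
    · intro h
      have hval : (x : F) ^ (q - 1) = 1 := by
        have := congrArg (Units.val) h
        simpa using this
      have hxq : (x : F) ^ q = (x : F) := by
        have : (x : F) ^ q = (x : F) ^ (q - 1) * (x : F) := by
          rw [← pow_succ]; congr 1; omega
        rw [this, hval, one_mul]
      exact aux_mem_prime_field _ hxq
    · rintro ⟨c, hc⟩
      have hc0 : c ≠ 0 := by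
        rintro rfl
        rw [map_zero] at hc
        exact (Units.ne_zero x) hc.symm
      apply Units.ext
      push_cast
      rw [← hc, ← map_pow, ZMod.pow_card_sub_one_eq_one hc0, map_one]
  have Lpsi0 : ∀ x : Fˣ, ψ x = 0 ↔
      ∃ c : ZMod q, algebraMap (ZMod q) F c = (x : F) := by
    intro x; rw [L3]; exact Lsc x
  have LpsiEq : ∀ x y : Fˣ, ψ x = ψ y ↔
      ∃ c : ZMod q, (y : F) = algebraMap (ZMod q) F c * (x : F) := by
    intro x y
    constructor
    · intro h
      have h0 : ψ (y * x⁻¹) = 0 := by rw [Lhom, Linv, h]; ring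
      obtain ⟨c, hc⟩ := (Lpsi0 _).1 h0
      refine ⟨c, ?_⟩
      have : (↑(y * x⁻¹) : F) = algebraMap (ZMod q) F c := hc.symm
      push_cast at this
      rw [mul_inv_eq_iff_eq_mul₀ (Units.ne_zero x)] at this
      linear_combination this
    · rintro ⟨c, hc⟩
      have hc0 : c ≠ 0 := by
        rintro rfl
        rw [map_zero, zero_mul] at hc
        exact (Units.ne_zero y) hc
      have h0 : ψ (y * x⁻¹) = 0 := by
        apply (Lpsi0 _).2 ⟨c, ?_⟩
        push_cast
        rw [hc]
        rw [mul_inv_cancel_right₀ (Units.ne_zero x)]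
      have := Lhom (y * x⁻¹) x
      rw [inv_mul_cancel_right, h0, zero_add] at this
      exact this.symm
  -- block sets and cardinality
  have LcardT : ∀ W : Submodule (ZMod q) F, W ∈ S →
      (univ.filter fun x : Fˣ => (x : F) ∈ W).card = q ^ k - 1 := by
    intro W hW
    haveI : Fintype W := Fintype.ofFinite W
    have hcW : Fintype.card W = q ^ k := by
      rw [Module.card_eq_pow_finrank (K := ZMod q) (V := W), ZMod.card, hdim W hW]
    have h1 : (univ.filter fun z : F => z ∈ W).card = q ^ k := by
      rw [← hcW]
      exact (Fintype.card_of_subtype (univ.filter fun z : F => z ∈ W) (by simp)).symm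
    have h2 : (univ.filter fun z : F => z ∈ W ∧ z ≠ 0)
        = (univ.filter fun z : F => z ∈ W).erase 0 := by
      ext z
      simp only [mem_filter, mem_univ, true_and, Finset.mem_erase]
      tauto
    have h3 : (univ.filter fun z : F => z ∈ W ∧ z ≠ 0).card = q ^ k - 1 := by
      rw [h2, Finset.card_erase_of_mem (by simp [W.zero_mem]), h1]
    rw [← h3]
    apply Finset.card_bij (fun (x : Fˣ) _ => (x : F))
    · intro x hx
      simp only [mem_filter, mem_univ, true_and] at hx ⊢
      exact ⟨hx, Units.ne_zero x⟩
    · intro x _ y _ h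
      exact Units.ext h
    · intro z hz
      simp only [mem_filter, mem_univ, true_and] at hz
      refine ⟨Units.mk0 z hz.2, ?_, rfl⟩
      simp only [mem_filter, mem_univ, true_and]
      exact hz.1
  set Bset : Submodule (ZMod q) F → Finset (ZMod v) :=
    fun W => univ.filter (fun dd => ∃ x : Fˣ, (x : F) ∈ W ∧ ψ x = dd) with hBset
  have LBmem : ∀ (W : Submodule (ZMod q) F) (dd : ZMod v),
      dd ∈ Bset W ↔ ∃ x : Fˣ, (x : F) ∈ W ∧ ψ x = dd := by
    intro W dd; simp [hBset]
  have Lcard : ∀ W ∈ S, (Bset W).card = (q ^ k - 1) / (q - 1) := by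
    intro W hW
    have hfib : ∀ dd ∈ Bset W,
        ((univ.filter fun x : Fˣ => (x : F) ∈ W).filter (fun x => ψ x = dd)).card = q - 1 := by
      intro dd hdd
      obtain ⟨x₀, hx₀W, hx₀ψ⟩ := (LBmem W dd).1 hdd
      have himg : (univ.filter fun x : Fˣ => (x : F) ∈ W).filter (fun x => ψ x = dd)
          = univ.image (fun c : (ZMod q)ˣ =>
              (Units.map (algebraMap (ZMod q) F).toMonoidHom c) * x₀) := by
        ext u
        simp only [mem_filter, mem_univ, true_and, mem_image]
        constructor
        · rintro ⟨huW, huψ⟩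
          have hpsieq : ψ x₀ = ψ u := by rw [hx₀ψ, huψ]
          obtain ⟨c, hc⟩ := (LpsiEq x₀ u).1 hpsieq
          have hc0 : c ≠ 0 := by
            rintro rfl
            rw [map_zero, zero_mul] at hc
            exact (Units.ne_zero u) hc
          refine ⟨Units.mk0 c hc0, ?_⟩
          apply Units.ext
          rw [Units.val_mul, Units.coe_map]
          simpa using hc.symm
        · rintro ⟨c, rfl⟩
          have hval : ((Units.map (algebraMap (ZMod q) F).toMonoidHom c * x₀ : Fˣ) : F)
              = algebraMap (ZMod q) F (c : ZMod q) * (x₀ : F) := by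
            rw [Units.val_mul, Units.coe_map]; rfl
          constructor
          · rw [hval, ← Algebra.smul_def]
            exact W.smul_mem _ hx₀W
          · rw [← hx₀ψ]
            exact ((LpsiEq x₀ _).2 ⟨c, hval⟩).symm
      rw [himg, Finset.card_image_of_injective _ ?_, card_univ, ZMod.card_units]
      intro a b h
      have h2 := mul_right_cancel h
      have h3 := congrArg (Units.val) h2
      rw [Units.coe_map, Units.coe_map] at h3
      exact Units.ext ((algebraMap (ZMod q) F).injective h3)
    have hsum := Finset.card_eq_sum_card_fiberwise
      (f := ψ) (s := univ.filter fun x : Fˣ => (x : F) ∈ W) (t := Bset W) ?_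
    · rw [LcardT W hW, Finset.sum_congr rfl hfib, Finset.sum_const, smul_eq_mul] at hsum
      exact (Nat.div_eq_of_eq_mul_left (by omega) hsum).symm
    · intro x hx
      simp only [coe_filter, mem_univ, true_and, Set.mem_setOf_eq] at hx
      exact (LBmem W _).2 ⟨x, hx, rfl⟩
  -- map-by-unit helpers
  have hmem : ∀ (a : Fˣ) (W : Submodule (ZMod q) F) (z : F),
      z ∈ Submodule.map (LinearMap.mulLeft (ZMod q) (a : F)) W ↔ ((a⁻¹ : Fˣ) : F) * z ∈ W := by
    intro a W z
    constructor
    · rintro ⟨w, hw, rfl⟩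
      simpa using hw
    · intro h
      refine ⟨((a⁻¹ : Fˣ) : F) * z, h, ?_⟩
      simp [LinearMap.mulLeft_apply, ← mul_assoc]
  have hcomp : ∀ (a b : Fˣ) (W : Submodule (ZMod q) F),
      Submodule.map (LinearMap.mulLeft (ZMod q) ((a * b : Fˣ) : F)) W
        = Submodule.map (LinearMap.mulLeft (ZMod q) (a : F))
            (Submodule.map (LinearMap.mulLeft (ZMod q) (b : F)) W) := by
    intro a b W
    rw [Units.val_mul, LinearMap.mulLeft_mul]
    exact Submodule.map_comp _ _ _
  have hid : ∀ W : Submodule (ZMod q) F,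
      Submodule.map (LinearMap.mulLeft (ZMod q) ((1 : Fˣ) : F)) W = W := by
    intro W
    rw [Units.val_one, LinearMap.mulLeft_one, Submodule.map_id]
  -- stabilizer lemma
  have STAB : ∀ (u : Fˣ) (W : Submodule (ZMod q) F), W ∈ S →
      Submodule.map (LinearMap.mulLeft (ZMod q) (u : F)) W = W → ψ u = 0 := by
    intro u W hWS hstab
    set T : Finset Fˣ := univ.filter (fun x : Fˣ => (x : F) ∈ W) with hT
    have hperm : ∀ x : Fˣ, x ∈ T ↔ u * x ∈ T := by
      intro x
      simp only [hT, mem_filter, mem_univ, true_and]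
      constructor
      · intro hx
        rw [← hstab]
        exact ⟨x, hx, by simp [LinearMap.mulLeft_apply]⟩
      · intro hx
        rw [← hstab, hmem] at hx
        simpa using hx
    have hprod : ∏ x ∈ T, (u * x) = ∏ x ∈ T, x := by
      apply Finset.prod_bij' (fun x _ => u * x) (fun x _ => u⁻¹ * x)
      · intro a ha; exact (hperm a).1 ha
      · intro a ha
        have := (hperm (u⁻¹ * a)).2 (by simpa using ha)
        exact this
      · intro a _; simp
      · intro a _; simp
      · intro a _; rfl
    rw [Finset.prod_mul_distrib, Finset.prod_const] at hprod
    have hpow : u ^ T.card = 1 := by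
      have h1 : u ^ T.card * ∏ x ∈ T, x = 1 * ∏ x ∈ T, x := by rw [one_mul]; exact hprod
      exact mul_right_cancel h1
    have hcT : T.card = q ^ k - 1 := LcardT W hWS
    have hdvd1 : orderOf u ∣ q ^ k - 1 := orderOf_dvd_of_pow_eq_one (hcT ▸ hpow)
    have hu1 : u ^ N = 1 := by rw [← hcardU]; exact pow_card_eq_one
    have hdvd2 : orderOf u ∣ N := orderOf_dvd_of_pow_eq_one hu1
    rw [hN] at hdvd2
    have hdvd3 : orderOf u ∣ q - 1 := aux_dvd_sub_one hq2 hco hdvd1 hdvd2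
    exact (L3 u).2 (orderOf_dvd_iff_pow_eq_one.1 hdvd3)
  -- key lemma
  have KEY : ∀ (δ : Fˣ) (W₀ : Submodule (ZMod q) F), (1 : F) ∈ W₀ → (δ : F) ∈ W₀ →
      (∀ W', W' ∈ S ∧ Submodule.span (ZMod q) {(1 : F), (δ : F)} ≤ W' → W' = W₀) →
      ∀ (W : Submodule (ZMod q) F), W ∈ S → ∀ y x : Fˣ, (y : F) ∈ W → (x : F) ∈ W →
      ψ x = ψ y + ψ δ →
      Submodule.map (LinearMap.mulLeft (ZMod q) ((y⁻¹ : Fˣ) : F)) W = W₀ := by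
    intro δ W₀ h1W₀ hδW₀ huniq W hWS y x hyW hxW hψx
    set U := Submodule.map (LinearMap.mulLeft (ZMod q) ((y⁻¹ : Fˣ) : F)) W with hU
    have hUS : U ∈ S := hinv _ (Units.ne_zero y⁻¹) W hWS
    have h1U : (1 : F) ∈ U := by
      rw [hU, hmem]
      simpa using hyW
    have hδU : (δ : F) ∈ U := by
      rw [hU, hmem]
      have hψ2 : ψ (δ * y) = ψ x := by rw [Lhom, hψx]; ring
      obtain ⟨c, hc⟩ := (LpsiEq (δ * y) x).1 hψ2
      have hc0 : c ≠ 0 := by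
        rintro rfl
        rw [map_zero, zero_mul] at hc
        exact (Units.ne_zero x) hc
      have halg : algebraMap (ZMod q) F c ≠ 0 := by
        simpa using hc0
      have heq : (((y⁻¹)⁻¹ : Fˣ) : F) * (δ : F) = algebraMap (ZMod q) F c⁻¹ * (x : F) := by
        rw [inv_inv, map_inv₀, hc]
        push_cast
        rw [inv_mul_cancel_left₀ halg]
        ring
      rw [heq, ← Algebra.smul_def]
      exact W.smul_mem _ hxW
    apply huniq U
    refine ⟨hUS, ?_⟩
    rw [Submodule.span_le]
    intro z hz
    simp only [Set.mem_insert_iff, Set.mem_singleton_iff] at hz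
    rcases hz with rfl | rfl
    · exact h1U
    · exact hδU
  -- orbit quotient
  haveI : Finite (Submodule (ZMod q) F) :=
    Finite.of_injective (fun W : Submodule (ZMod q) F => (W : Set F)) SetLike.coe_injective
  have hequiv : Equivalence (fun W W' : ↥S => ∃ c : Fˣ,
      Submodule.map (LinearMap.mulLeft (ZMod q) (c : F)) W.1 = W'.1) := by
    constructor
    · intro W; exact ⟨1, hid _⟩
    · rintro W W' ⟨c, hc⟩
      refine ⟨c⁻¹, ?_⟩
      rw [← hc, ← hcomp, inv_mul_cancel, hid]
    · rintro W W' W'' ⟨c, hc⟩ ⟨c', hc'⟩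
      refine ⟨c' * c, ?_⟩
      rw [hcomp, hc, hc']
  let sd : Setoid ↥S := ⟨_, hequiv⟩
  let Q := Quotient sd
  haveI : Fintype Q := Fintype.ofFinite Q
  let e : Fin (Fintype.card Q) ≃ Q := (Fintype.equivFin Q).symm
  refine ⟨Fintype.card Q, fun i => Bset (Quotient.out (e i)).1,
    fun i => Lcard _ (Quotient.out (e i)).2, ?_⟩
  intro d hd
  -- choose a lift of d
  set δ : Fˣ := g ^ (d.val : ℕ) with hδdef
  have hψδ : ψ δ = d := by rw [hδdef, L1]; exact ZMod.natCast_rightInverse d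
  -- linear independence of 1 and δ
  have hnotsc : ¬ ∃ c : ZMod q, algebraMap (ZMod q) F c = (δ : F) := by
    intro hc
    exact hd (by rw [← hψδ]; exact (Lpsi0 δ).2 hc)
  have hli : LinearIndependent (ZMod q) ![(1 : F), (δ : F)] := by
    rw [LinearIndependent.pair_iff]
    intro a b hab
    have hab' : algebraMap (ZMod q) F a + algebraMap (ZMod q) F b * (δ : F) = 0 := by
      simpa [Algebra.smul_def] using hab
    by_cases hb : b = 0
    · subst hb
      have h0 : algebraMap (ZMod q) F a = 0 := by simpa using hab'
      have ha0 : a = 0 :=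
        (algebraMap (ZMod q) F).injective (h0.trans (map_zero _).symm)
      exact ⟨ha0, rfl⟩
    · exfalso
      apply hnotsc
      refine ⟨-a / b, ?_⟩
      have hbne : algebraMap (ZMod q) F b ≠ 0 := fun hh =>
        hb ((algebraMap (ZMod q) F).injective (hh.trans (map_zero _).symm))
      rw [map_div₀, map_neg, div_eq_iff hbne]
      linear_combination -hab'
  have hrank : Module.finrank (ZMod q)
      (Submodule.span (ZMod q) {(1 : F), (δ : F)}) = 2 := by
    have h1 := finrank_span_eq_card hli
    rw [Matrix.range_cons_cons_empty] at h1
    simpa using h1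
  obtain ⟨W₀, ⟨hW₀S, hTW₀⟩, hWuniq⟩ := hcov _ hrank
  have huniq' : ∀ W', W' ∈ S ∧
      Submodule.span (ZMod q) {(1 : F), (δ : F)} ≤ W' → W' = W₀ :=
    fun W' h => hWuniq W' h
  have h1W₀ : (1 : F) ∈ W₀ := hTW₀ (Submodule.subset_span (by simp))
  have hδW₀ : (δ : F) ∈ W₀ := hTW₀ (Submodule.subset_span (by simp))
  let qc₀ : Q := Quotient.mk sd ⟨W₀, hW₀S⟩
  obtain ⟨c, hc⟩ : ∃ c : Fˣ, Submodule.map (LinearMap.mulLeft (ZMod q) (c : F))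
      (Quotient.out qc₀).1 = W₀ := Quotient.exact (Quotient.out_eq qc₀)
  have hcinv : Submodule.map (LinearMap.mulLeft (ZMod q) ((c⁻¹ : Fˣ) : F)) W₀
      = (Quotient.out qc₀).1 := by
    rw [← hc, ← hcomp, inv_mul_cancel, hid]
  set b₀ : ZMod v := ψ c⁻¹ with hb₀def
  have hmemcinv : ((c⁻¹ : Fˣ) : F) ∈ (Quotient.out qc₀).1 := by
    rw [← hcinv, hmem]
    simpa using h1W₀
  have hmemcδ : ((c⁻¹ * δ : Fˣ) : F) ∈ (Quotient.out qc₀).1 := by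
    rw [← hcinv, hmem]
    have : ((c⁻¹⁻¹ : Fˣ) : F) * ((c⁻¹ * δ : Fˣ) : F) = (δ : F) := by
      push_cast
      rw [inv_inv]
      rw [← mul_assoc, ← Units.val_inv_eq_inv_val, Units.mul_inv, one_mul]
    rw [this]
    exact hδW₀
  have hψcδ : ψ (c⁻¹ * δ) = b₀ + d := by rw [Lhom, hψδ, hb₀def]
  have ha₀mem : b₀ + d ∈ Bset (Quotient.out qc₀).1 :=
    (LBmem _ _).2 ⟨c⁻¹ * δ, hmemcδ, hψcδ⟩
  have hb₀mem : b₀ ∈ Bset (Quotient.out qc₀).1 :=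
    (LBmem _ _).2 ⟨c⁻¹, hmemcinv, rfl⟩
  have CLAIM : ∀ qc : Q, ∀ p : ZMod v × ZMod v,
      p ∈ ((Bset (Quotient.out qc).1 ×ˢ Bset (Quotient.out qc).1).filter
        fun p => p.1 ≠ p.2 ∧ p.1 - p.2 = d) → qc = qc₀ ∧ p = (b₀ + d, b₀) := by
    intro qc p hp
    rw [Finset.mem_filter, Finset.mem_product] at hp
    obtain ⟨⟨ha, hb⟩, hne, hsub⟩ := hp
    obtain ⟨x, hxW, hψx⟩ := (LBmem _ _).1 ha
    obtain ⟨y, hyW, hψy⟩ := (LBmem _ _).1 hb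
    have hψxy : ψ x = ψ y + ψ δ := by
      rw [hψx, hψy, hψδ]
      linear_combination hsub
    have hkey := KEY δ W₀ h1W₀ hδW₀ huniq' _ (Quotient.out qc).2 y x hyW hxW hψxy
    have hqc : qc = qc₀ := by
      have h1 : Quotient.mk sd (Quotient.out qc) = Quotient.mk sd ⟨W₀, hW₀S⟩ :=
        Quotient.sound ⟨y⁻¹, hkey⟩
      rw [Quotient.out_eq] at h1
      exact h1
    subst hqc
    have hstab : Submodule.map (LinearMap.mulLeft (ZMod q) ((c⁻¹ * y⁻¹ : Fˣ) : F))
        (Quotient.out qc₀).1 = (Quotient.out qc₀).1 := by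
      rw [hcomp, hkey, hcinv]
    have hψu : ψ (c⁻¹ * y⁻¹) = 0 := STAB _ _ (Quotient.out qc₀).2 hstab
    rw [Lhom, Linv, Linv] at hψu
    have hb' : p.2 = b₀ := by
      rw [hb₀def, Linv, ← hψy]
      linear_combination -hψu
    have ha' : p.1 = b₀ + d := by
      rw [← hb']
      linear_combination hsub
    refine ⟨rfl, Prod.ext ha' hb'⟩
  have hne₀ : b₀ + d ≠ b₀ := fun hcontra => hd (by linear_combination hcontra)
  have hf : ∀ qc : Q,
      (((Bset (Quotient.out qc).1) ×ˢ (Bset (Quotient.out qc).1)).filter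
        fun p => p.1 ≠ p.2 ∧ p.1 - p.2 = d).card = if qc = qc₀ then 1 else 0 := by
    intro qc
    by_cases h : qc = qc₀
    · subst h
      rw [if_pos rfl, Finset.card_eq_one]
      refine ⟨(b₀ + d, b₀), Finset.eq_singleton_iff_unique_mem.2 ⟨?_, ?_⟩⟩
      · rw [Finset.mem_filter, Finset.mem_product]
        exact ⟨⟨ha₀mem, hb₀mem⟩, hne₀, by ring⟩
      · intro p hp
        exact (CLAIM _ p hp).2
    · rw [if_neg h, Finset.card_eq_zero]
      rw [Finset.eq_empty_iff_forall_notMem]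
      intro p hp
      exact h (CLAIM qc p hp).1
  have hsum1 : ∑ i : Fin (Fintype.card Q),
      (((Bset (Quotient.out (e i)).1) ×ˢ (Bset (Quotient.out (e i)).1)).filter
        fun p => p.1 ≠ p.2 ∧ p.1 - p.2 = d).card
      = ∑ qc : Q, (((Bset (Quotient.out qc).1) ×ˢ (Bset (Quotient.out qc).1)).filter
        fun p => p.1 ≠ p.2 ∧ p.1 - p.2 = d).card :=
    Equiv.sum_comp e (fun qc => (((Bset (Quotient.out qc).1) ×ˢ (Bset (Quotient.out qc).1)).filter
        fun p => p.1 ≠ p.2 ∧ p.1 - p.2 = d).card)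
  show ∑ i : Fin (Fintype.card Q),
      (((Bset (Quotient.out (e i)).1) ×ˢ (Bset (Quotient.out (e i)).1)).filter
        fun p => p.1 ≠ p.2 ∧ p.1 - p.2 = d).card = 1
  rw [hsum1, Finset.sum_congr rfl (fun qc _ => hf qc), Finset.sum_ite_eq' univ qc₀ (fun _ => 1)]
  simp
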